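/- Let x̃ : [0,∞) → ℝⁿ be differentiable (the tracking error of the closed-loop system) and let d̃ : [0,∞) → ℝ^{n₂} be continuous with d̃(t) → 0 as t → ∞ (the disturbance estimation error). Suppose there exist a continuously differentiable function V : [0,∞) × ℝⁿ → ℝ, class-K∞ functions α̲, ᾱ, α, and a class-K function σ such that α̲(‖ξ‖) ≤ V(t,ξ) ≤ ᾱ(‖ξ‖) for all t ≥ 0 and ξ ∈ ℝⁿ, and such that the derivative along the trajectory satisfies (d/dt) V(t, x̃(t)) ≤ −α(‖x̃(t)‖) + σ(‖d̃(t)‖) for all t ≥ 0. Then x̃ is bounded on [0,∞) and lim_{t→∞} x̃(t) = 0. -/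

import Mathlib

open Filter Topology

lemma descent_aux (W : ℝ → ℝ) (T δ M : ℝ) (hδ : 0 < δ)
    (hdiff : ∀ t ≥ T, DifferentiableAt ℝ W t)
    (hder : ∀ t ≥ T, M < W t → deriv W t ≤ -δ)
    (hpos : ∀ t ≥ T, 0 ≤ W t) :
    ∀ᶠ t in atTop, W t ≤ M := by
  have hcont : ∀ t ≥ T, ContinuousAt W t := fun t ht => (hdiff t ht).continuousAt
  -- C1 : once below a level ≥ M, stay below
  have C1 : ∀ a, T ≤ a → ∀ b, a ≤ b → W b ≤ max (W a) M := by
    intro a ha b hab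
    by_contra hcon
    push_neg at hcon
    set M' := max (W a) M with hM'
    set S := {u ∈ Set.Icc a b | W u ≤ M'} with hS
    have hSne : S.Nonempty := ⟨a, ⟨le_rfl, hab⟩, le_max_left _ _⟩
    have hSbd : BddAbove S := ⟨b, fun u hu => hu.1.2⟩
    have hScl : IsClosed S := by
      have : ContinuousOn W (Set.Icc a b) := fun u hu =>
        (hcont u (ha.trans hu.1)).continuousWithinAt
      exact this.preimage_isClosed_of_isClosed isClosed_Icc isClosed_Iic
    set s := sSup S with hs
    have hsS : s ∈ S := hScl.csSup_mem hSne hSbd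
    have hslt : s < b := lt_of_le_of_ne hsS.1.2 (by
      intro h; rw [h] at hsS; exact absurd hsS.2 (not_le.mpr hcon))
    have hgt : ∀ u, s < u → u ≤ b → M' < W u := by
      intro u h1 h2
      by_contra h
      push_neg at h
      have : u ∈ S := ⟨⟨hsS.1.1.trans h1.le, h2⟩, h⟩
      exact absurd (le_csSup hSbd this) (not_le.mpr h1)
    have hTa : T ≤ s := ha.trans hsS.1.1
    have hanti : AntitoneOn W (Set.Icc s b) := by
      apply antitoneOn_of_deriv_nonpos (convex_Icc s b)
      · exact fun u hu => (hcont u (hTa.trans hu.1)).continuousWithinAt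
      · intro u hu
        rw [interior_Icc] at hu
        exact (hdiff u (hTa.trans hu.1.le)).differentiableWithinAt
      · intro u hu
        rw [interior_Icc] at hu
        have h1 : M < W u := lt_of_le_of_lt (le_max_right _ _) (hgt u hu.1 hu.2.le)
        exact (hder u (hTa.trans hu.1.le) h1).trans (by linarith)
    have : W b ≤ W s := hanti ⟨le_rfl, hslt.le⟩ ⟨hslt.le, le_rfl⟩ hslt.le
    exact absurd (this.trans hsS.2) (not_le.mpr hcon)
  -- C2 : W drops below M at some time
  have C2 : ∃ t₀ ≥ T, W t₀ ≤ M := by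
    by_contra hcon
    push_neg at hcon
    set K := W T / δ + 1 with hK
    have hWT : 0 ≤ W T := hpos T le_rfl
    have hKpos : 0 < K := by positivity
    set b := T + K with hb
    have hTb : T ≤ b := by linarith
    set g := fun u => W u + δ * u with hg
    have hganti : AntitoneOn g (Set.Icc T b) := by
      apply antitoneOn_of_deriv_nonpos (convex_Icc T b)
      · exact fun u hu => ((hcont u hu.1).add (continuous_const.continuousAt.mul continuous_id.continuousAt)).continuousWithinAt
      · intro u hu
        rw [interior_Icc] at hu
        exact ((hdiff u hu.1.le).add ((differentiable_id.const_mul δ) u)).differentiableWithinAt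
      · intro u hu
        rw [interior_Icc] at hu
        have hdg : deriv g u = deriv W u + δ := by
          have h1 : HasDerivAt W (deriv W u) u := (hdiff u hu.1.le).hasDerivAt
          have h2 : HasDerivAt (fun y : ℝ => δ * y) (δ * 1) u := (hasDerivAt_id u).const_mul δ
          have := (h1.add h2).deriv
          simpa using (show deriv g u = deriv W u + δ * 1 from this)
        rw [hdg]
        have := hder u hu.1.le (hcon u hu.1.le)
        linarith
    have := hganti ⟨le_rfl, hTb⟩ ⟨hTb, le_rfl⟩ hTb
    have hWb : 0 ≤ W b := hpos b hTb
    simp only [hg] at this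
    have hδK : δ * K = W T + δ := by rw [hK, mul_add, mul_one, mul_div_assoc', mul_comm δ (W T), mul_div_assoc, div_self hδ.ne', mul_one]
    nlinarith
  obtain ⟨t₀, ht₀, hWt₀⟩ := C2
  filter_upwards [eventually_ge_atTop t₀] with t ht
  have := C1 t₀ ht₀ t ht
  rwa [max_eq_right hWt₀] at this

/-- Class-`𝒦` function: continuous, strictly increasing on `[0,∞)`, vanishing at `0`. -/
def IsClassK (f : ℝ → ℝ) : Prop :=
  ContinuousOn f (Set.Ici 0) ∧ StrictMonoOn f (Set.Ici 0) ∧ f 0 = 0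

/-- Class-`𝒦∞` function: class `𝒦` and unbounded. -/
def IsClassKInf (f : ℝ → ℝ) : Prop :=
  IsClassK f ∧ Tendsto f atTop atTop

/-- Matched-disturbance tracking: an ISS-Lyapunov inequality
along the tracking error `x̃`, driven by a vanishing disturbance estimation
error `d̃`, implies that `x̃` is bounded and converges to zero. -/
theorem stmt6 {n n₂ : ℕ}
    (xt : ℝ → EuclideanSpace ℝ (Fin n)) (dt : ℝ → EuclideanSpace ℝ (Fin n₂))
    (hxt : ∀ t ≥ (0:ℝ), DifferentiableAt ℝ xt t)
    (hdtc : ContinuousOn dt (Set.Ici 0))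
    (hdt0 : Tendsto dt atTop (nhds 0))
    (V : ℝ → EuclideanSpace ℝ (Fin n) → ℝ)
    (hV : ContDiff ℝ 1 (fun p : ℝ × EuclideanSpace ℝ (Fin n) => V p.1 p.2))
    (αl αu α σ : ℝ → ℝ)
    (hαl : IsClassKInf αl) (hαu : IsClassKInf αu) (hα : IsClassKInf α)
    (hσ : IsClassK σ)
    (hVbound : ∀ t ≥ (0:ℝ), ∀ ξ : EuclideanSpace ℝ (Fin n),
      αl ‖ξ‖ ≤ V t ξ ∧ V t ξ ≤ αu ‖ξ‖)
    (hdV : ∀ t ≥ (0:ℝ),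
      deriv (fun s => V s (xt s)) t ≤ -α ‖xt t‖ + σ ‖dt t‖) :
    (∃ C, ∀ t ≥ (0:ℝ), ‖xt t‖ ≤ C) ∧ Tendsto xt atTop (nhds 0) := by
  set W := fun s => V s (xt s) with hWdef
  -- differentiability of W on [0,∞)
  have hWdiff : ∀ t ≥ (0:ℝ), DifferentiableAt ℝ W t := by
    intro t ht
    have hF : DifferentiableAt ℝ (fun p : ℝ × EuclideanSpace ℝ (Fin n) => V p.1 p.2) (t, xt t) :=
      (hV.differentiable one_ne_zero) (t, xt t)
    exact hF.comp t (differentiableAt_id.prodMk (hxt t ht))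
  have hαl0 : αl 0 = 0 := hαl.1.2.2
  have hαu0 : αu 0 = 0 := hαu.1.2.2
  have hα0 : α 0 = 0 := hα.1.2.2
  have hσ0 : σ 0 = 0 := hσ.2.2
  have hWlow : ∀ t ≥ (0:ℝ), αl ‖xt t‖ ≤ W t := fun t ht => (hVbound t ht (xt t)).1
  have hWhigh : ∀ t ≥ (0:ℝ), W t ≤ αu ‖xt t‖ := fun t ht => (hVbound t ht (xt t)).2
  have hWpos : ∀ t ≥ (0:ℝ), 0 ≤ W t := by
    intro t ht
    have : αl 0 ≤ αl ‖xt t‖ :=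
      hαl.1.2.1.monotoneOn Set.self_mem_Ici (norm_nonneg _) (norm_nonneg _)
    rw [hαl0] at this
    exact this.trans (hWlow t ht)
  -- σ‖dt t‖ → 0
  have hσto0 : Tendsto (fun t => σ ‖dt t‖) atTop (𝓝 0) := by
    have hnorm : Tendsto (fun t => ‖dt t‖) atTop (𝓝 0) := by
      simpa using hdt0.norm
    have hnorm' : Tendsto (fun t => ‖dt t‖) atTop (𝓝[Set.Ici 0] 0) := by
      rw [tendsto_nhdsWithin_iff]
      exact ⟨hnorm, Eventually.of_forall fun t => norm_nonneg _⟩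
    have hcw : ContinuousWithinAt σ (Set.Ici 0) 0 := hσ.1 0 (Set.self_mem_Ici)
    have := hcw.tendsto.comp hnorm'
    rwa [hσ0] at this
  -- key: eventual smallness of ‖xt‖
  have key : ∀ ε > (0:ℝ), ∀ᶠ t in atTop, ‖xt t‖ ≤ ε := by
    intro ε hε
    -- choose ρ > 0 with αu ρ < αl ε
    have hαlε : 0 < αl ε := by
      have := hαl.1.2.1 Set.self_mem_Ici (le_of_lt hε : (0:ℝ) ≤ ε) hε
      rwa [hαl0] at this
    have hρex : ∃ ρ > (0:ℝ), αu ρ < αl ε := by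
      have hcw : Tendsto αu (𝓝[Set.Ici (0:ℝ)] 0) (𝓝 0) := by
        have := (hαu.1.1 0 Set.self_mem_Ici).tendsto
        rwa [hαu0] at this
      have hev : ∀ᶠ u in 𝓝[Set.Ici (0:ℝ)] 0, αu u < αl ε :=
        hcw.eventually_lt_const hαlε
      have hev' : ∀ᶠ u in 𝓝[Set.Ioi (0:ℝ)] 0, αu u < αl ε :=
        hev.filter_mono (nhdsWithin_mono _ Set.Ioi_subset_Ici_self)
      obtain ⟨ρ, hρ1, hρ2⟩ := (hev'.and self_mem_nhdsWithin).exists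
      exact ⟨ρ, hρ2, hρ1⟩
    obtain ⟨ρ, hρpos, hρ⟩ := hρex
    set δ := α ρ / 2 with hδdef
    have hαρ : 0 < α ρ := by
      have := hα.1.2.1 Set.self_mem_Ici hρpos.le hρpos
      rwa [hα0] at this
    have hδ : 0 < δ := by positivity
    obtain ⟨T₀, hT₀⟩ : ∃ T₀, ∀ t ≥ T₀, σ ‖dt t‖ < δ :=
      (hσto0.eventually_lt_const hδ).exists_forall_of_atTop
    set T := max T₀ 0 with hT
    have hdesc : ∀ᶠ t in atTop, W t ≤ αu ρ := by
      apply descent_aux W T δ (αu ρ) hδ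
      · exact fun t ht => hWdiff t (le_trans (le_max_right _ _) ht)
      · intro t ht hWt
        have ht0 : (0:ℝ) ≤ t := le_trans (le_max_right _ _) ht
        have hxρ : ρ < ‖xt t‖ := by
          have h1 : αu ρ < αu ‖xt t‖ := lt_of_lt_of_le hWt (hWhigh t ht0)
          by_contra h
          push_neg at h
          exact absurd (hαu.1.2.1.monotoneOn (norm_nonneg _) hρpos.le h) (not_le.mpr h1)
        have hαx : α ρ ≤ α ‖xt t‖ :=
          hα.1.2.1.monotoneOn hρpos.le (norm_nonneg _) hxρ.le
        have hσt : σ ‖dt t‖ < δ := hT₀ t (le_trans (le_max_left _ _) ht)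
        have := hdV t ht0
        have : deriv W t ≤ -α ‖xt t‖ + σ ‖dt t‖ := this
        rw [hδdef] at *
        linarith
      · exact fun t ht => hWpos t (le_trans (le_max_right _ _) ht)
    filter_upwards [hdesc, eventually_ge_atTop (0:ℝ)] with t hWt ht0
    have h1 : αl ‖xt t‖ ≤ αl ε := le_trans (hWlow t ht0) (hWt.trans hρ.le)
    by_contra h
    push_neg at h
    exact absurd (hαl.1.2.1 (le_of_lt hε : (0:ℝ) ≤ ε) (norm_nonneg _) h) (not_lt.mpr h1)
  -- convergence
  have hconv : Tendsto xt atTop (nhds 0) := by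
    rw [NormedAddCommGroup.tendsto_nhds_zero]
    intro ε hε
    filter_upwards [key (ε/2) (by linarith)] with t ht
    linarith
  refine ⟨?_, hconv⟩
  -- boundedness
  obtain ⟨a, ha⟩ := (key 1 one_pos).exists_forall_of_atTop
  set T' := max a 0 with hT'
  have hT'0 : (0:ℝ) ≤ T' := le_max_right _ _
  have hcontx : ContinuousOn (fun t => ‖xt t‖) (Set.Icc 0 T') :=
    fun t ht => ((hxt t ht.1).continuousAt.norm).continuousWithinAt
  obtain ⟨m, hm, hmax⟩ := (isCompact_Icc (a := (0:ℝ)) (b := T')).exists_isMaxOn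
    ⟨0, le_rfl, hT'0⟩ hcontx
  refine ⟨max (‖xt m‖) 1, fun t ht => ?_⟩
  rcases le_total t T' with h | h
  · exact le_trans (hmax ⟨ht, h⟩) (le_max_left _ _)
  · exact le_trans (ha t (le_trans (le_max_left _ _) h)) (le_max_right _ _)
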